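/- arXiv:1806.05271 — 5 statements merged into one kernel-verified Lean document; each statement's English description precedes it below -/
import Mathlib

section
/- Let x₁, …, x_m be nonnegative reals, let 1 ≤ k ≤ m−1, and suppose the sum of x₁, …, x_k equals (k/m)·(x₁+⋯+x_m) + Δ. Then x₁² + ⋯ + x_m² ≥ (1/m)(x₁+⋯+x_m)² + Δ²·m/(k(m−k)) ≥ (1/m)(x₁+⋯+x_m)² + Δ²/k. -/
open SimpleGraph

/-- The subgraph of `G` consisting of the edges of color `i`. -/
def colorSub {V : Type*} {r : ℕ} (G : SimpleGraph V) (c : Sym2 V → Fin r) (i : Fin r) :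
    SimpleGraph V where
  Adj u v := G.Adj u v ∧ c s(u, v) = i
  symm := by
    constructor
    intro u v h
    exact ⟨h.1.symm, by rw [Sym2.eq_swap]; exact h.2⟩
  loopless := by
    constructor
    intro u h
    exact G.loopless.irrefl u h.1

/-- The degree of `v`, as the number of its neighbors. -/
noncomputable def nd {V : Type*} (G : SimpleGraph V) (v : V) : ℕ :=
  (G.neighborSet v).ncard

theorem stmt6 (m k : ℕ) (hk1 : 1 ≤ k) (hkm : k ≤ m - 1) (hm : 1 ≤ m)
    (x : Fin m → ℝ) (hx : ∀ i, 0 ≤ x i) (Δ : ℝ)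
    (h : ∑ i ∈ Finset.univ.filter (fun i : Fin m => (i : ℕ) < k), x i
        = ((k : ℝ) / m) * ∑ i, x i + Δ) :
    (1 / (m : ℝ)) * (∑ i, x i) ^ 2 + Δ ^ 2 * m / (k * ((m : ℝ) - k)) ≤ ∑ i, (x i) ^ 2 ∧
    (1 / (m : ℝ)) * (∑ i, x i) ^ 2 + Δ ^ 2 / k ≤
      (1 / (m : ℝ)) * (∑ i, x i) ^ 2 + Δ ^ 2 * m / (k * ((m : ℝ) - k)) := by
  have hkm' : k < m := by omega
  set s : Finset (Fin m) := Finset.univ.filter (fun i : Fin m => (i : ℕ) < k) with hs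
  have hcard : s.card = k := by
    have : s = Finset.Iio ⟨k, hkm'⟩ := by
      ext i; simp [hs, Fin.lt_def]
    rw [this, Fin.card_Iio]
  have hccard : sᶜ.card = m - k := by
    rw [Finset.card_compl, hcard]; simp
  have hk0 : (0:ℝ) < k := by exact_mod_cast hk1
  have hmk0 : (0:ℝ) < (m:ℝ) - k := by
    have : (k:ℝ) < m := by exact_mod_cast hkm'
    linarith
  have hm0 : (0:ℝ) < m := by positivity
  set S := ∑ i, x i with hS
  set A := ∑ i ∈ s, x i with hA
  have hB : ∑ i ∈ sᶜ, x i = S - A := by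
    rw [hS, hA, ← Finset.sum_compl_add_sum s x]; ring
  have h1 : A ^ 2 ≤ k * ∑ i ∈ s, x i ^ 2 := by
    have := sq_sum_le_card_mul_sum_sq (s := s) (f := x)
    rw [hcard] at this; exact_mod_cast this
  have h2 : (S - A) ^ 2 ≤ ((m:ℝ) - k) * ∑ i ∈ sᶜ, x i ^ 2 := by
    have := sq_sum_le_card_mul_sum_sq (s := sᶜ) (f := x)
    rw [hccard, hB] at this
    have hcast : ((m - k : ℕ) : ℝ) = (m:ℝ) - k := by
      push_cast [Nat.cast_sub hkm'.le]; ring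
    rw [hcast] at this; exact_mod_cast this
  have hsplit : ∑ i, x i ^ 2 = ∑ i ∈ s, x i ^ 2 + ∑ i ∈ sᶜ, x i ^ 2 := by
    rw [← Finset.sum_compl_add_sum s]; ring
  have key : A ^ 2 / k + (S - A) ^ 2 / ((m:ℝ) - k) ≤ ∑ i, x i ^ 2 := by
    rw [hsplit]
    gcongr
    · exact div_le_of_le_mul₀ (by positivity) (Finset.sum_nonneg fun i _ => sq_nonneg _) (by linarith [h1])
    · exact div_le_of_le_mul₀ (by positivity) (Finset.sum_nonneg fun i _ => sq_nonneg _) (by linarith [h2])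
  have heq : A ^ 2 / k + (S - A) ^ 2 / ((m:ℝ) - k)
      = (1 / (m : ℝ)) * S ^ 2 + Δ ^ 2 * m / (k * ((m : ℝ) - k)) := by
    have hA' : A = (k:ℝ)/m * S + Δ := h
    rw [hA']; field_simp; ring
  constructor
  · rw [← heq]; exact key
  · gcongr (1 / (m : ℝ)) * S ^ 2 + ?_
    rw [div_le_div_iff₀ hk0 (by positivity)]
    have hΔ := sq_nonneg Δ
    nlinarith [sq_nonneg Δ, mul_nonneg hΔ hk0.le]
end

section
/- Let G be a bipartite graph with parts X and Y with |X| + |Y| = n and |Y| ≥ |X| > n/4. Suppose every vertex of X has at least |Y| − n/8 neighbors in Y and every vertex of Y has at least |X| − n/8 neighbors in X. Then in every 2-coloring of the edges of G there is a monochromatic connected component H with |H ∩ X| ≥ |X|/2 and |H ∩ Y| ≥ |Y|/2; in particular H has at least n/2 vertices. -/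
open SimpleGraph

set_option maxHeartbeats 2000000 in
theorem stmt12 (a b n : ℕ) (hn : a + b = n) (hab : a ≤ b) (ha : (n : ℝ) / 4 < a)
    (G : SimpleGraph (Fin a ⊕ Fin b))
    (hbip : G ≤ completeBipartiteGraph (Fin a) (Fin b))
    (hX : ∀ x : Fin a, (b : ℝ) - n / 8 ≤ (nd G (Sum.inl x) : ℝ))
    (hY : ∀ y : Fin b, (a : ℝ) - n / 8 ≤ (nd G (Sum.inr y) : ℝ))
    (c : Sym2 (Fin a ⊕ Fin b) → Fin 2) :
    ∃ (i : Fin 2) (C : (colorSub G c i).ConnectedComponent),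
      (a : ℝ) / 2 ≤ ((C.supp ∩ Set.range Sum.inl).ncard : ℝ) ∧
      (b : ℝ) / 2 ≤ ((C.supp ∩ Set.range Sum.inr).ncard : ℝ) ∧
      (n : ℝ) / 2 ≤ (C.supp.ncard : ℝ) := by
  classical
  set X : Set (Fin a ⊕ Fin b) := Set.range Sum.inl with hXdef
  set Y : Set (Fin a ⊕ Fin b) := Set.range Sum.inr with hYdef
  have hXcard : X.ncard = a := by
    rw [hXdef, ← Set.image_univ, Set.ncard_image_of_injective _ Sum.inl_injective,
      Set.ncard_univ, Nat.card_eq_fintype_card, Fintype.card_fin]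
  have hYcard : Y.ncard = b := by
    rw [hYdef, ← Set.image_univ, Set.ncard_image_of_injective _ Sum.inr_injective,
      Set.ncard_univ, Nat.card_eq_fintype_card, Fintype.card_fin]
  have hXYdisj : ∀ v, v ∈ X → v ∈ Y → False := by
    rintro v ⟨p, rfl⟩ ⟨q, h⟩
    cases h
  have ha0 : 0 < a := by
    by_contra h
    push_neg at h
    have h0 : a = 0 := by omega
    have h1 : (a : ℝ) = 0 := by exact_mod_cast h0
    have hnn : (0 : ℝ) ≤ n := Nat.cast_nonneg n
    linarith
  have habR : (a : ℝ) ≤ b := by exact_mod_cast hab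
  have hnR : (a : ℝ) + b = n := by exact_mod_cast hn
  have hn8 : (n : ℝ) / 8 < a / 2 := by linarith
  have ha0R : (1 : ℝ) ≤ a := by exact_mod_cast ha0
  have hNX : ∀ p : Fin a, G.neighborSet (Sum.inl p) ⊆ Y := by
    intro p v hv
    have h2 := hbip hv
    rcases v with q | q
    · simp [completeBipartiteGraph] at h2
    · exact ⟨q, rfl⟩
  have hNY : ∀ q : Fin b, G.neighborSet (Sum.inr q) ⊆ X := by
    intro q v hv
    have h2 := hbip hv
    rcases v with p | p
    · exact ⟨p, rfl⟩
    · simp [completeBipartiteGraph] at h2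
  have hmissX : ∀ p : Fin a, ((Y \ G.neighborSet (Sum.inl p)).ncard : ℝ) ≤ n / 8 := by
    intro p
    have hsub := hNX p
    have hle : (G.neighborSet (Sum.inl p)).ncard ≤ b := by
      have := Set.ncard_le_ncard hsub (Set.toFinite Y)
      rwa [hYcard] at this
    have h1 : (Y \ G.neighborSet (Sum.inl p)).ncard = b - (G.neighborSet (Sum.inl p)).ncard := by
      rw [Set.ncard_diff hsub, hYcard]
    rw [h1]
    have hcast : ((b - (G.neighborSet (Sum.inl p)).ncard : ℕ) : ℝ)
        = (b : ℝ) - (G.neighborSet (Sum.inl p)).ncard := by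
      exact Nat.cast_sub hle
    rw [hcast]
    have := hX p
    have hnd : (nd G (Sum.inl p) : ℝ) = ((G.neighborSet (Sum.inl p)).ncard : ℝ) := rfl
    rw [hnd] at this
    linarith
  have hmissY : ∀ q : Fin b, ((X \ G.neighborSet (Sum.inr q)).ncard : ℝ) ≤ n / 8 := by
    intro q
    have hsub := hNY q
    have hle : (G.neighborSet (Sum.inr q)).ncard ≤ a := by
      have := Set.ncard_le_ncard hsub (Set.toFinite X)
      rwa [hXcard] at this
    have h1 : (X \ G.neighborSet (Sum.inr q)).ncard = a - (G.neighborSet (Sum.inr q)).ncard := by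
      rw [Set.ncard_diff hsub, hXcard]
    rw [h1]
    have hcast : ((a - (G.neighborSet (Sum.inr q)).ncard : ℕ) : ℝ)
        = (a : ℝ) - (G.neighborSet (Sum.inr q)).ncard := by
      exact Nat.cast_sub hle
    rw [hcast]
    have := hY q
    have hnd : (nd G (Sum.inr q) : ℝ) = ((G.neighborSet (Sum.inr q)).ncard : ℝ) := rfl
    rw [hnd] at this
    linarith
  have hcutX : ∀ (p : Fin a) (S : Set (Fin a ⊕ Fin b)), S ⊆ Y →
      (S.ncard : ℝ) ≤ ((S ∩ G.neighborSet (Sum.inl p)).ncard : ℝ) + n / 8 := by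
    intro p S hS
    have hsplit : S ⊆ (S ∩ G.neighborSet (Sum.inl p)) ∪ (Y \ G.neighborSet (Sum.inl p)) := by
      intro v hv
      by_cases hvN : v ∈ G.neighborSet (Sum.inl p)
      · exact Or.inl ⟨hv, hvN⟩
      · exact Or.inr ⟨hS hv, hvN⟩
    have h1 := Set.ncard_le_ncard hsplit (Set.toFinite _)
    have h2 := Set.ncard_union_le (S ∩ G.neighborSet (Sum.inl p)) (Y \ G.neighborSet (Sum.inl p))
    have h3 := hmissX p
    have : (S.ncard : ℝ) ≤ ((S ∩ G.neighborSet (Sum.inl p)).ncard : ℝ)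
        + ((Y \ G.neighborSet (Sum.inl p)).ncard : ℝ) := by exact_mod_cast le_trans h1 h2
    linarith
  have hcutY : ∀ (q : Fin b) (S : Set (Fin a ⊕ Fin b)), S ⊆ X →
      (S.ncard : ℝ) ≤ ((S ∩ G.neighborSet (Sum.inr q)).ncard : ℝ) + n / 8 := by
    intro q S hS
    have hsplit : S ⊆ (S ∩ G.neighborSet (Sum.inr q)) ∪ (X \ G.neighborSet (Sum.inr q)) := by
      intro v hv
      by_cases hvN : v ∈ G.neighborSet (Sum.inr q)
      · exact Or.inl ⟨hv, hvN⟩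
      · exact Or.inr ⟨hS hv, hvN⟩
    have h1 := Set.ncard_le_ncard hsplit (Set.toFinite _)
    have h2 := Set.ncard_union_le (S ∩ G.neighborSet (Sum.inr q)) (X \ G.neighborSet (Sum.inr q))
    have h3 := hmissY q
    have : (S.ncard : ℝ) ≤ ((S ∩ G.neighborSet (Sum.inr q)).ncard : ℝ)
        + ((X \ G.neighborSet (Sum.inr q)).ncard : ℝ) := by exact_mod_cast le_trans h1 h2
    linarith
  -- component infrastructure
  have hfin2 : ∀ t i : Fin 2, t ≠ i → t = 1 - i := by decide
  set K : Fin 2 → (Fin a ⊕ Fin b) → Set (Fin a ⊕ Fin b) :=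
    fun i v => ((colorSub G c i).connectedComponentMk v).supp with hKdef
  have hKself : ∀ (i : Fin 2) (v), v ∈ K i v := by
    intro i v
    simp [hKdef, ConnectedComponent.mem_supp_iff]
  have hKeq : ∀ (i : Fin 2) (u v), v ∈ K i u → K i v = K i u := by
    intro i u v hv
    simp only [hKdef, ConnectedComponent.mem_supp_iff] at hv
    simp only [hKdef, hv]
  have hKadj : ∀ (i : Fin 2) (u w), G.Adj u w → c s(u, w) = i → w ∈ K i u := by
    intro i u w hadj hc
    have hA : (colorSub G c i).Adj u w := ⟨hadj, hc⟩
    simp only [hKdef, ConnectedComponent.mem_supp_iff]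
    exact ConnectedComponent.sound hA.symm.reachable
  have hcross : ∀ (i : Fin 2) (u w), G.Adj u w → w ∉ K i u → w ∈ K (1 - i) u := by
    intro i u w hadj hw
    by_cases hc : c s(u, w) = i
    · exact absurd (hKadj i u w hadj hc) hw
    · exact hKadj (1 - i) u w hadj (hfin2 _ i hc)
  -- the maximum Y-side size over all monochromatic components
  set A : Set ℕ := {m | ∃ (i : Fin 2) (v : Fin a ⊕ Fin b), m = (K i v ∩ Y).ncard} with hAdef
  have hAne : A.Nonempty := ⟨(K 0 (Sum.inl ⟨0, ha0⟩) ∩ Y).ncard, 0, Sum.inl ⟨0, ha0⟩, rfl⟩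
  have hAbdd : BddAbove A := by
    refine ⟨b, ?_⟩
    rintro m ⟨i, v, rfl⟩
    have := Set.ncard_le_ncard (Set.inter_subset_right (s := K i v) (t := Y)) (Set.toFinite Y)
    rwa [hYcard] at this
  set s := sSup A with hsdef
  have hsmem : s ∈ A := Nat.sSup_mem hAne hAbdd
  have hsmax : ∀ (i : Fin 2) (v), (K i v ∩ Y).ncard ≤ s := fun i v => le_csSup hAbdd ⟨i, v, rfl⟩
  have hgoal : ∀ (j : Fin 2) (v : Fin a ⊕ Fin b),
      (a : ℝ) / 2 ≤ ((K j v ∩ X).ncard : ℝ) → (b : ℝ) / 2 ≤ ((K j v ∩ Y).ncard : ℝ) →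
      ∃ (i : Fin 2) (C : (colorSub G c i).ConnectedComponent),
        (a : ℝ) / 2 ≤ ((C.supp ∩ X).ncard : ℝ) ∧
        (b : ℝ) / 2 ≤ ((C.supp ∩ Y).ncard : ℝ) ∧
        (n : ℝ) / 2 ≤ (C.supp.ncard : ℝ) := by
    intro j v h1 h2
    refine ⟨j, (colorSub G c j).connectedComponentMk v, h1, h2, ?_⟩
    have hdisj : Disjoint (K j v ∩ X) (K j v ∩ Y) := by
      rw [Set.disjoint_left]
      rintro w ⟨-, hwX⟩ ⟨-, hwY⟩
      exact hXYdisj w hwX hwY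
    have hsub : (K j v ∩ X) ∪ (K j v ∩ Y) ⊆ K j v := by
      rintro w (⟨hw, -⟩ | ⟨hw, -⟩) <;> exact hw
    have hcard := Set.ncard_union_eq hdisj (Set.toFinite _) (Set.toFinite _)
    have hle := Set.ncard_le_ncard hsub (Set.toFinite _)
    rw [hcard] at hle
    have : ((K j v ∩ X).ncard : ℝ) + ((K j v ∩ Y).ncard : ℝ) ≤ ((K j v).ncard : ℝ) := by
      exact_mod_cast hle
    have hfinal : (n : ℝ) / 2 ≤ ((K j v).ncard : ℝ) := by linarith
    exact hfinal
  have hXdiffcard : ∀ S : Set (Fin a ⊕ Fin b), ((X \ S).ncard : ℝ) ≥ (a : ℝ) - ((X ∩ S).ncard : ℝ) := by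
    intro S
    have h1 : X \ S = X \ (X ∩ S) := by
      ext w; constructor
      · rintro ⟨hw, hw2⟩; exact ⟨hw, fun h => hw2 h.2⟩
      · rintro ⟨hw, hw2⟩; exact ⟨hw, fun h => hw2 ⟨hw, h⟩⟩
    have h2 : (X \ (X ∩ S)).ncard = X.ncard - (X ∩ S).ncard :=
      Set.ncard_diff Set.inter_subset_left
    have h3 : (X ∩ S).ncard ≤ X.ncard :=
      Set.ncard_le_ncard Set.inter_subset_left (Set.toFinite X)
    have h4 : ((X.ncard - (X ∩ S).ncard : ℕ) : ℝ)
        = (X.ncard : ℝ) - ((X ∩ S).ncard : ℝ) := Nat.cast_sub h3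
    rw [h1, h2, h4, hXcard]
  by_cases hs : (b : ℝ) / 2 ≤ (s : ℝ)
  · -- CASE 1 : some component C has |C ∩ Y| = s ≥ b/2
    obtain ⟨i, v0, hv0⟩ := hsmem
    have hScard : (((K i v0 ∩ Y)).ncard : ℝ) = (s : ℝ) := by exact_mod_cast hv0.symm
    by_cases hCX : (a : ℝ) / 2 ≤ ((K i v0 ∩ X).ncard : ℝ)
    · have h2 : (b : ℝ) / 2 ≤ ((K i v0 ∩ Y).ncard : ℝ) := by rw [hScard]; exact hs
      exact hgoal i v0 hCX h2
    · push_neg at hCX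
      have hXc : ((X ∩ K i v0).ncard : ℝ) < (a : ℝ) / 2 := by
        rwa [Set.inter_comm] at hCX
      set T : Set (Fin a ⊕ Fin b) := X \ K i v0 with hTdef
      have hTX : T ⊆ X := Set.diff_subset
      have hTbig : (a : ℝ) / 2 < (T.ncard : ℝ) := by
        have := hXdiffcard (K i v0)
        linarith
      have hTne : T.Nonempty := by
        apply Set.nonempty_of_ncard_ne_zero
        intro h0
        rw [h0] at hTbig
        norm_num at hTbig
        linarith
      obtain ⟨w1, hw1⟩ := hTne
      have hn1R : (1 : ℝ) ≤ n := by
        have : 1 ≤ n := by omega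
        exact_mod_cast this
      have hbn : (n : ℝ) ≤ 2 * b := by linarith
      have hspos : (0 : ℝ) < (s : ℝ) - n / 8 := by linarith
      have hTpos : (0 : ℝ) < (T.ncard : ℝ) - n / 8 := by linarith
      -- edges leaving the component C are colored 1 - i
      have hcrossT : ∀ w, w ∈ T → ∀ y, y ∈ K i v0 → G.Adj w y → y ∈ K (1 - i) w := by
        intro w hw y hy hadj
        have hyK : y ∉ K i w := by
          intro hyK
          exact hw.2 ((hKeq i w y hyK).symm.trans (hKeq i v0 y hy) ▸ hKself i w)
        exact hcross i w y hadj hyK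
      have hcrossS : ∀ y, y ∈ K i v0 ∩ Y → ∀ w, w ∈ T → G.Adj y w → w ∈ K (1 - i) y := by
        intro y hy w hw hadj
        have hwK : w ∉ K i y := by
          intro hwK
          exact hw.2 (((hKeq i y w hwK).trans (hKeq i v0 y hy.1)) ▸ hKself i w)
        exact hcross i y w hadj hwK
      -- any (1-i)-component touching T ∪ S contains most of S and most of T
      have hPS : ∀ w ∈ T, (s : ℝ) - n / 8 ≤ (((K i v0 ∩ Y) ∩ K (1 - i) w).ncard : ℝ) := by
        rintro w hw
        obtain ⟨p, hp⟩ := hTX hw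
        subst hp
        have hsub : (K i v0 ∩ Y) ∩ G.neighborSet (Sum.inl p)
            ⊆ (K i v0 ∩ Y) ∩ K (1 - i) (Sum.inl p) := by
          rintro y ⟨hy, hyN⟩
          exact ⟨hy, hcrossT _ hw y hy.1 hyN⟩
        have h1 := hcutX p (K i v0 ∩ Y) Set.inter_subset_right
        have h2 : (((K i v0 ∩ Y) ∩ G.neighborSet (Sum.inl p)).ncard : ℝ)
            ≤ (((K i v0 ∩ Y) ∩ K (1 - i) (Sum.inl p)).ncard : ℝ) := by
          exact_mod_cast Set.ncard_le_ncard hsub (Set.toFinite _)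
        linarith [hScard]
      have hPT : ∀ y ∈ K i v0 ∩ Y, (T.ncard : ℝ) - n / 8 ≤ ((T ∩ K (1 - i) y).ncard : ℝ) := by
        rintro y hy
        obtain ⟨q, hq⟩ := hy.2
        have hy' := hy
        subst hq
        have hsub : T ∩ G.neighborSet (Sum.inr q) ⊆ T ∩ K (1 - i) (Sum.inr q) := by
          rintro w ⟨hw, hwN⟩
          exact ⟨hw, hcrossS _ hy' w hw hwN⟩
        have h1 := hcutY q T hTX
        have h2 : ((T ∩ G.neighborSet (Sum.inr q)).ncard : ℝ)
            ≤ ((T ∩ K (1 - i) (Sum.inr q)).ncard : ℝ) := by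
          exact_mod_cast Set.ncard_le_ncard hsub (Set.toFinite _)
        linarith
      have htouch : ∀ w, w ∈ T ∪ (K i v0 ∩ Y) →
          ((s : ℝ) - n / 8 ≤ (((K i v0 ∩ Y) ∩ K (1 - i) w).ncard : ℝ)) ∧
          ((T.ncard : ℝ) - n / 8 ≤ ((T ∩ K (1 - i) w).ncard : ℝ)) := by
        rintro w (hw | hw)
        · refine ⟨hPS w hw, ?_⟩
          have hne : ((K i v0 ∩ Y) ∩ K (1 - i) w).Nonempty := by
            apply Set.nonempty_of_ncard_ne_zero
            intro h0
            have := hPS w hw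
            rw [h0] at this
            norm_num at this
            linarith
          obtain ⟨y, hyS, hyK⟩ := hne
          have heq := hKeq (1 - i) w y hyK
          have := hPT y hyS
          rwa [heq] at this
        · refine ⟨?_, hPT w hw⟩
          have hne : (T ∩ K (1 - i) w).Nonempty := by
            apply Set.nonempty_of_ncard_ne_zero
            intro h0
            have := hPT w hw
            rw [h0] at this
            norm_num at this
            linarith
          obtain ⟨t, htT, htK⟩ := hne
          have heq := hKeq (1 - i) w t htK
          have := hPS t htT
          rwa [heq] at this
      -- all of T ∪ S lies in the single (1-i)-component of w1
      have huniq : ∀ w, w ∈ T ∪ (K i v0 ∩ Y) → K (1 - i) w = K (1 - i) w1 := by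
        intro w hw
        by_contra hne
        obtain ⟨hS1, hT1⟩ := htouch w hw
        obtain ⟨hS2, hT2⟩ := htouch w1 (Or.inl hw1)
        have hdisjS : Disjoint ((K i v0 ∩ Y) ∩ K (1 - i) w) ((K i v0 ∩ Y) ∩ K (1 - i) w1) := by
          rw [Set.disjoint_left]
          rintro z ⟨-, hz1⟩ ⟨-, hz2⟩
          exact hne ((hKeq _ _ _ hz1).symm.trans (hKeq _ _ _ hz2))
        have hdisjT : Disjoint (T ∩ K (1 - i) w) (T ∩ K (1 - i) w1) := by
          rw [Set.disjoint_left]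
          rintro z ⟨-, hz1⟩ ⟨-, hz2⟩
          exact hne ((hKeq _ _ _ hz1).symm.trans (hKeq _ _ _ hz2))
        have hsubS : ((K i v0 ∩ Y) ∩ K (1 - i) w) ∪ ((K i v0 ∩ Y) ∩ K (1 - i) w1)
            ⊆ K i v0 ∩ Y := by
          rintro z (⟨hz, -⟩ | ⟨hz, -⟩) <;> exact hz
        have hsubT : (T ∩ K (1 - i) w) ∪ (T ∩ K (1 - i) w1) ⊆ T := by
          rintro z (⟨hz, -⟩ | ⟨hz, -⟩) <;> exact hz
        have hcS := Set.ncard_union_eq hdisjS (Set.toFinite _) (Set.toFinite _)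
        have hcT := Set.ncard_union_eq hdisjT (Set.toFinite _) (Set.toFinite _)
        have hlS := Set.ncard_le_ncard hsubS (Set.toFinite _)
        have hlT := Set.ncard_le_ncard hsubT (Set.toFinite _)
        rw [hcS] at hlS
        rw [hcT] at hlT
        have hlSR : (((K i v0 ∩ Y) ∩ K (1 - i) w).ncard : ℝ)
            + (((K i v0 ∩ Y) ∩ K (1 - i) w1).ncard : ℝ) ≤ ((K i v0 ∩ Y).ncard : ℝ) := by
          exact_mod_cast hlS
        have hlTR : ((T ∩ K (1 - i) w).ncard : ℝ) + ((T ∩ K (1 - i) w1).ncard : ℝ)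
            ≤ (T.ncard : ℝ) := by
          exact_mod_cast hlT
        -- s ≤ n/4 and |T| ≤ n/4, contradiction
        have h1 : (s : ℝ) ≤ n / 4 := by linarith [hScard]
        have h2 : (T.ncard : ℝ) ≤ n / 4 := by linarith
        linarith
      have hTD : T ⊆ K (1 - i) w1 := by
        intro w hw
        rw [← huniq w (Or.inl hw)]
        exact hKself (1 - i) w
      have hSD : K i v0 ∩ Y ⊆ K (1 - i) w1 := by
        intro y hy
        rw [← huniq y (Or.inr hy)]
        exact hKself (1 - i) y
      have hXcard' : (a : ℝ) / 2 ≤ ((K (1 - i) w1 ∩ X).ncard : ℝ) := by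
        have hsub : T ⊆ K (1 - i) w1 ∩ X := fun w hw => ⟨hTD hw, hTX hw⟩
        have := Set.ncard_le_ncard hsub (Set.toFinite _)
        have hR : (T.ncard : ℝ) ≤ ((K (1 - i) w1 ∩ X).ncard : ℝ) := by exact_mod_cast this
        linarith
      have hYcard' : (b : ℝ) / 2 ≤ ((K (1 - i) w1 ∩ Y).ncard : ℝ) := by
        have hsub : K i v0 ∩ Y ⊆ K (1 - i) w1 ∩ Y := fun y hy => ⟨hSD hy, hy.2⟩
        have := Set.ncard_le_ncard hsub (Set.toFinite _)
        have hR : ((K i v0 ∩ Y).ncard : ℝ) ≤ ((K (1 - i) w1 ∩ Y).ncard : ℝ) := by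
          exact_mod_cast this
        linarith [hScard]
      exact hgoal (1 - i) w1 hXcard' hYcard'
  · push_neg at hs
    exfalso
    -- every x-x' pair in a common i-component shares its (1-i)-component
    have hsame : ∀ (i : Fin 2) (p q : Fin a), Sum.inl q ∈ K i (Sum.inl p) →
        K (1 - i) (Sum.inl p) = K (1 - i) (Sum.inl q) := by
      intro i p q hq
      by_contra hne
      set W : Set (Fin a ⊕ Fin b) := Y \ K i (Sum.inl p) with hWdef
      have hWY : W ⊆ Y := Set.diff_subset
      have hWcard : (b : ℝ) - s ≤ (W.ncard : ℝ) := by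
        have h1 : Y \ K i (Sum.inl p) = Y \ (K i (Sum.inl p) ∩ Y) := by
          ext w; constructor
          · rintro ⟨hw, hw2⟩; exact ⟨hw, fun h => hw2 h.1⟩
          · rintro ⟨hw, hw2⟩; exact ⟨hw, fun h => hw2 ⟨h, hw⟩⟩
        have h2 : (Y \ (K i (Sum.inl p) ∩ Y)).ncard = b - (K i (Sum.inl p) ∩ Y).ncard := by
          rw [Set.ncard_diff Set.inter_subset_right, hYcard]
        have h3 : (K i (Sum.inl p) ∩ Y).ncard ≤ b := by
          have := Set.ncard_le_ncard (Set.inter_subset_right (s := K i (Sum.inl p)) (t := Y))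
            (Set.toFinite Y)
          rwa [hYcard] at this
        have h4 : ((b - (K i (Sum.inl p) ∩ Y).ncard : ℕ) : ℝ)
            = (b : ℝ) - ((K i (Sum.inl p) ∩ Y).ncard : ℝ) := Nat.cast_sub h3
        have h5 : ((K i (Sum.inl p) ∩ Y).ncard : ℝ) ≤ s := by exact_mod_cast hsmax i (Sum.inl p)
        rw [hWdef, h1, h2, h4]
        linarith
      have hWbig : (n : ℝ) / 4 < (W.ncard : ℝ) := by linarith
      -- both (1-i)-components eat most of W, but they are disjoint
      have hsub1 : W ∩ G.neighborSet (Sum.inl p) ⊆ W ∩ K (1 - i) (Sum.inl p) := by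
        rintro w ⟨hwW, hwN⟩
        exact ⟨hwW, hcross i (Sum.inl p) w hwN hwW.2⟩
      have hsub2 : W ∩ G.neighborSet (Sum.inl q) ⊆ W ∩ K (1 - i) (Sum.inl q) := by
        rintro w ⟨hwW, hwN⟩
        refine ⟨hwW, hcross i (Sum.inl q) w hwN ?_⟩
        rw [hKeq i (Sum.inl p) (Sum.inl q) hq]
        exact hwW.2
      have hc1 : (W.ncard : ℝ) - n / 8 ≤ ((W ∩ K (1 - i) (Sum.inl p)).ncard : ℝ) := by
        have := hcutX p W hWY
        have hm : ((W ∩ G.neighborSet (Sum.inl p)).ncard : ℝ)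
            ≤ ((W ∩ K (1 - i) (Sum.inl p)).ncard : ℝ) := by
          exact_mod_cast Set.ncard_le_ncard hsub1 (Set.toFinite _)
        linarith
      have hc2 : (W.ncard : ℝ) - n / 8 ≤ ((W ∩ K (1 - i) (Sum.inl q)).ncard : ℝ) := by
        have := hcutX q W hWY
        have hm : ((W ∩ G.neighborSet (Sum.inl q)).ncard : ℝ)
            ≤ ((W ∩ K (1 - i) (Sum.inl q)).ncard : ℝ) := by
          exact_mod_cast Set.ncard_le_ncard hsub2 (Set.toFinite _)
        linarith
      have hdisj : Disjoint (W ∩ K (1 - i) (Sum.inl p)) (W ∩ K (1 - i) (Sum.inl q)) := by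
        rw [Set.disjoint_left]
        rintro w ⟨-, hw1⟩ ⟨-, hw2⟩
        exact hne ((hKeq _ _ _ hw1).symm.trans (hKeq _ _ _ hw2))
      have hsubW : (W ∩ K (1 - i) (Sum.inl p)) ∪ (W ∩ K (1 - i) (Sum.inl q)) ⊆ W := by
        rintro w (⟨hw, -⟩ | ⟨hw, -⟩) <;> exact hw
      have hcard := Set.ncard_union_eq hdisj (Set.toFinite _) (Set.toFinite _)
      have hle := Set.ncard_le_ncard hsubW (Set.toFinite _)
      rw [hcard] at hle
      have hleR : ((W ∩ K (1 - i) (Sum.inl p)).ncard : ℝ)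
          + ((W ∩ K (1 - i) (Sum.inl q)).ncard : ℝ) ≤ (W.ncard : ℝ) := by exact_mod_cast hle
      linarith
    -- pairing of components along X
    have hpair : ∀ p : Fin a, X ∩ K 0 (Sum.inl p) = X ∩ K 1 (Sum.inl p) := by
      intro p
      have h10 : (1 : Fin 2) - 0 = 1 := rfl
      have h11 : (1 : Fin 2) - 1 = 0 := rfl
      apply Set.Subset.antisymm
      · rintro v ⟨⟨q, rfl⟩, hvK⟩
        have := hsame 0 p q hvK
        rw [h10] at this
        refine ⟨⟨q, rfl⟩, ?_⟩
        rw [this]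
        exact hKself 1 (Sum.inl q)
      · rintro v ⟨⟨q, rfl⟩, hvK⟩
        have := hsame 1 p q hvK
        rw [h11] at this
        refine ⟨⟨q, rfl⟩, ?_⟩
        rw [this]
        exact hKself 0 (Sum.inl q)
    have hedge : ∀ (u w : Fin a ⊕ Fin b), G.Adj u w → w ∈ K 0 u ∨ w ∈ K 1 u := by
      intro u w hadj
      by_cases hc : c s(u, w) = 0
      · exact Or.inl (hKadj 0 u w hadj hc)
      · exact Or.inr (hKadj 1 u w hadj (hfin2 _ 0 hc))
    -- each X-part of a component is small
    have hsmall : ∀ p : Fin a, ((X ∩ K 0 (Sum.inl p)).ncard : ℝ) ≤ n / 8 := by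
      intro p
      have hout : ∃ qq : Fin b, Sum.inr qq ∉ K 0 (Sum.inl p) ∧ Sum.inr qq ∉ K 1 (Sum.inl p) := by
        by_contra h
        push_neg at h
        have hcover : Y ⊆ (K 0 (Sum.inl p) ∩ Y) ∪ (K 1 (Sum.inl p) ∩ Y) := by
          rintro w ⟨q, rfl⟩
          by_cases h0 : Sum.inr q ∈ K 0 (Sum.inl p)
          · exact Or.inl ⟨h0, ⟨q, rfl⟩⟩
          · exact Or.inr ⟨h q h0, ⟨q, rfl⟩⟩
        have h1 := Set.ncard_le_ncard hcover (Set.toFinite _)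
        have h2 := Set.ncard_union_le (K 0 (Sum.inl p) ∩ Y) (K 1 (Sum.inl p) ∩ Y)
        rw [hYcard] at h1
        have h3 := hsmax 0 (Sum.inl p)
        have h4 := hsmax 1 (Sum.inl p)
        have : (b : ℝ) ≤ (s : ℝ) + (s : ℝ) := by
          have : b ≤ s + s := by omega
          exact_mod_cast this
        linarith
      obtain ⟨qq, hq0, hq1⟩ := hout
      have hsub : X ∩ K 0 (Sum.inl p) ⊆ X \ G.neighborSet (Sum.inr qq) := by
        rintro v ⟨⟨r, rfl⟩, hvK⟩
        refine ⟨⟨r, rfl⟩, fun hadj => ?_⟩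
        have hadj' : G.Adj (Sum.inl r) (Sum.inr qq) := hadj.symm
        rcases hedge (Sum.inl r) (Sum.inr qq) hadj' with h0 | h1
        · rw [hKeq 0 (Sum.inl p) (Sum.inl r) hvK] at h0
          exact hq0 h0
        · have hvK1 : Sum.inl r ∈ K 1 (Sum.inl p) := by
            have : Sum.inl r ∈ X ∩ K 1 (Sum.inl p) := by
              rw [← hpair p]; exact ⟨⟨r, rfl⟩, hvK⟩
            exact this.2
          rw [hKeq 1 (Sum.inl p) (Sum.inl r) hvK1] at h1
          exact hq1 h1
      have h1 : ((X ∩ K 0 (Sum.inl p)).ncard : ℝ)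
          ≤ ((X \ G.neighborSet (Sum.inr qq)).ncard : ℝ) := by
        exact_mod_cast Set.ncard_le_ncard hsub (Set.toFinite _)
      linarith [hmissY qq]
    -- pick three x's in pairwise different components
    set x1 : Fin a := ⟨0, ha0⟩ with hx1def
    have hne2 : (X \ K 0 (Sum.inl x1)).Nonempty := by
      apply Set.nonempty_of_ncard_ne_zero
      intro h0
      have hA := hXdiffcard (K 0 (Sum.inl x1))
      rw [h0] at hA
      push_cast at hA
      linarith [hsmall x1]
    obtain ⟨w2, hw2X, hw2K⟩ := hne2
    obtain ⟨x2, rfl⟩ := hw2X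
    have hne3 : (X \ (K 0 (Sum.inl x1) ∪ K 0 (Sum.inl x2))).Nonempty := by
      apply Set.nonempty_of_ncard_ne_zero
      intro h0
      have hd : Disjoint (X ∩ K 0 (Sum.inl x1)) (X ∩ K 0 (Sum.inl x2)) := by
        rw [Set.disjoint_left]
        rintro w ⟨-, hwa⟩ ⟨-, hwb⟩
        exact hw2K ((hKeq _ _ _ hwb).symm.trans (hKeq _ _ _ hwa) ▸ hKself 0 (Sum.inl x2))
      have hinter : X ∩ (K 0 (Sum.inl x1) ∪ K 0 (Sum.inl x2))
          = (X ∩ K 0 (Sum.inl x1)) ∪ (X ∩ K 0 (Sum.inl x2)) := Set.inter_union_distrib_left ..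
      have hcard := Set.ncard_union_eq hd (Set.toFinite _) (Set.toFinite _)
      have hA := hXdiffcard (K 0 (Sum.inl x1) ∪ K 0 (Sum.inl x2))
      rw [h0, hinter, hcard] at hA
      push_cast at hA
      linarith [hsmall x1, hsmall x2]
    obtain ⟨w3, hw3X, hw3K⟩ := hne3
    obtain ⟨x3, rfl⟩ := hw3X
    have hw3K1 : Sum.inl x3 ∉ K 0 (Sum.inl x1) := fun h => hw3K (Or.inl h)
    have hw3K2 : Sum.inl x3 ∉ K 0 (Sum.inl x2) := fun h => hw3K (Or.inr h)
    -- the six components are pairwise distinct within each color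
    have hd0 : ∀ (u v : Fin a ⊕ Fin b), v ∉ K 0 u → K 0 u ≠ K 0 v := by
      intro u v hv h
      exact hv (h ▸ hKself 0 v)
    have hd1 : ∀ (p q : Fin a), Sum.inl q ∉ K 0 (Sum.inl p) →
        K 1 (Sum.inl p) ≠ K 1 (Sum.inl q) := by
      intro p q hpq h
      apply hpq
      have : Sum.inl q ∈ X ∩ K 1 (Sum.inl p) := ⟨⟨q, rfl⟩, h ▸ hKself 1 (Sum.inl q)⟩
      rw [← hpair p] at this
      exact this.2
    -- cover Y by the three non-neighborhoods
    have hcov : ∀ q : Fin b, Sum.inr q ∈ (Y \ G.neighborSet (Sum.inl x1))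
        ∪ (Y \ G.neighborSet (Sum.inl x2)) ∪ (Y \ G.neighborSet (Sum.inl x3)) := by
      intro q
      by_contra hq
      simp only [Set.mem_union, not_or] at hq
      obtain ⟨⟨h1, h2⟩, h3⟩ := hq
      have hy : Sum.inr q ∈ Y := ⟨q, rfl⟩
      have ha1 : G.Adj (Sum.inl x1) (Sum.inr q) := by
        by_contra h; exact h1 ⟨hy, h⟩
      have ha2 : G.Adj (Sum.inl x2) (Sum.inr q) := by
        by_contra h; exact h2 ⟨hy, h⟩
      have ha3 : G.Adj (Sum.inl x3) (Sum.inr q) := by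
        by_contra h; exact h3 ⟨hy, h⟩
      have hmerge : ∀ (i : Fin 2) (u v : Fin a ⊕ Fin b), Sum.inr q ∈ K i u →
          Sum.inr q ∈ K i v → K i u = K i v := by
        intro i u v h1 h2
        exact (hKeq _ _ _ h1).symm.trans (hKeq _ _ _ h2)
      rcases hedge _ _ ha1 with hb1 | hb1 <;>
        rcases hedge _ _ ha2 with hb2 | hb2 <;>
          rcases hedge _ _ ha3 with hb3 | hb3
      · exact hd0 _ _ hw2K (hmerge 0 _ _ hb1 hb2)
      · exact hd0 _ _ hw2K (hmerge 0 _ _ hb1 hb2)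
      · exact hd0 _ _ hw3K1 (hmerge 0 _ _ hb1 hb3)
      · exact hd1 x2 x3 hw3K2 (hmerge 1 _ _ hb2 hb3)
      · exact hd0 _ _ hw3K2 (hmerge 0 _ _ hb2 hb3)
      · exact hd1 x1 x3 hw3K1 (hmerge 1 _ _ hb1 hb3)
      · exact hd1 x1 x2 hw2K (hmerge 1 _ _ hb1 hb2)
      · exact hd1 x1 x2 hw2K (hmerge 1 _ _ hb1 hb2)
    have hYcover : Y ⊆ (Y \ G.neighborSet (Sum.inl x1))
        ∪ (Y \ G.neighborSet (Sum.inl x2)) ∪ (Y \ G.neighborSet (Sum.inl x3)) := by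
      rintro w ⟨q, rfl⟩
      exact hcov q
    have h1 := Set.ncard_le_ncard hYcover (Set.toFinite _)
    have h2 := Set.ncard_union_le ((Y \ G.neighborSet (Sum.inl x1))
        ∪ (Y \ G.neighborSet (Sum.inl x2))) (Y \ G.neighborSet (Sum.inl x3))
    have h3 := Set.ncard_union_le (Y \ G.neighborSet (Sum.inl x1))
        (Y \ G.neighborSet (Sum.inl x2))
    rw [hYcard] at h1
    have hbR : (b : ℝ) ≤ ((Y \ G.neighborSet (Sum.inl x1)).ncard : ℝ)
        + ((Y \ G.neighborSet (Sum.inl x2)).ncard : ℝ)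
        + ((Y \ G.neighborSet (Sum.inl x3)).ncard : ℝ) := by
      have : b ≤ (Y \ G.neighborSet (Sum.inl x1)).ncard
          + (Y \ G.neighborSet (Sum.inl x2)).ncard
          + (Y \ G.neighborSet (Sum.inl x3)).ncard := by omega
      exact_mod_cast this
    have hend : (b : ℝ) ≤ 3 * (n / 8) := by
      linarith [hmissX x1, hmissX x2, hmissX x3]
    -- but b ≥ n/2 and n ≥ 1
    have hn1 : (1 : ℝ) ≤ n := by
      have : 1 ≤ n := by omega
      exact_mod_cast this
    linarith
end

section
/- Let G be a bipartite graph with parts X, Y of sizes m, n, with every vertex of X having more than (2/3)n neighbors in Y and every vertex of Y having more than (2/3)m neighbors in X, and fix a 2-coloring of the edges. If some monochromatic component intersects X in at least 2m/3 vertices or intersects Y in at least 2n/3 vertices, then some monochromatic component has at least (m+n)/2 vertices. -/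
open SimpleGraph

lemma ncard_inter_lower {V : Type*} [Fintype V] {S T X : Set V} (hS : S ⊆ X) (hT : T ⊆ X) :
    S.ncard + T.ncard ≤ X.ncard + (S ∩ T).ncard := by
  have h1 := Set.ncard_union_add_ncard_inter S T S.toFinite T.toFinite
  have h2 : (S ∪ T).ncard ≤ X.ncard :=
    Set.ncard_le_ncard (Set.union_subset hS hT) X.toFinite
  omega

/-- An edge from a vertex in a component of color `i` to a vertex outside it has the
other color. -/
lemma color_of_adj {V : Type*} {G : SimpleGraph V} {c : Sym2 V → Fin 2} {i : Fin 2}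
    {C : (colorSub G c i).ConnectedComponent} {x y : V}
    (hx : x ∈ C.supp) (hy : y ∉ C.supp) (hadj : G.Adj x y) : c s(x, y) = i + 1 := by
  have hne : c s(x, y) ≠ i := by
    intro h
    apply hy
    have hadj' : (colorSub G c i).Adj x y := ⟨hadj, h⟩
    rw [SimpleGraph.ConnectedComponent.mem_supp_iff] at hx ⊢
    rw [← hx]
    exact SimpleGraph.ConnectedComponent.sound hadj'.symm.reachable
  have : ∀ a b : Fin 2, a ≠ b → a = b + 1 := by decide
  exact this _ _ hne

lemma key {V : Type*} [Fintype V] (G : SimpleGraph V) (X Y : Set V)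
    (hdisj : Disjoint X Y)
    (hNX : ∀ y ∈ Y, G.neighborSet y ⊆ X)
    (hNY : ∀ x ∈ X, G.neighborSet x ⊆ Y)
    (hdX : ∀ x ∈ X, (2 / 3 : ℝ) * Y.ncard < (nd G x : ℝ))
    (hdY : ∀ y ∈ Y, (2 / 3 : ℝ) * X.ncard < (nd G y : ℝ))
    (c : Sym2 V → Fin 2) (i : Fin 2) (C : (colorSub G c i).ConnectedComponent)
    (hC : 2 * (X.ncard : ℝ) / 3 ≤ ((C.supp ∩ X).ncard : ℝ)) :
    ∃ (j : Fin 2) (D : (colorSub G c j).ConnectedComponent),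
      ((X.ncard : ℝ) + Y.ncard) / 2 ≤ (D.supp.ncard : ℝ) := by
  classical
  set A : Set V := C.supp ∩ X with hA
  set B : Set V := C.supp ∩ Y with hB
  have hAX : A ⊆ X := Set.inter_subset_right
  have hBY : B ⊆ Y := Set.inter_subset_right
  have hdisjAB : Disjoint A B := (hdisj.mono hAX hBY)
  by_cases hBbig : (Y.ncard : ℝ) / 2 ≤ (B.ncard : ℝ)
  · -- component C itself is big
    refine ⟨i, C, ?_⟩
    have hsub : A ∪ B ⊆ C.supp := by
      rw [hA, hB, ← Set.inter_union_distrib_left]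
      exact Set.inter_subset_left
    have h1 : (A ∪ B).ncard ≤ C.supp.ncard := Set.ncard_le_ncard hsub C.supp.toFinite
    have h2 : (A ∪ B).ncard = A.ncard + B.ncard := Set.ncard_union_eq hdisjAB
    have h3 : (0 : ℝ) ≤ (X.ncard : ℝ) := by positivity
    have h4 : ((A ∪ B).ncard : ℝ) ≤ (C.supp.ncard : ℝ) := by exact_mod_cast h1
    rw [h2] at h4
    push_cast at h4
    linarith
  · push_neg at hBbig
    -- |Y \ B| > |Y|/2
    have hYfin : Y.Finite := Y.toFinite
    have hYB : ((Y \ B).ncard : ℝ) = (Y.ncard : ℝ) - B.ncard :=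
      Set.cast_ncard_sdiff hBY hYfin
    have hYBbig : (Y.ncard : ℝ) / 2 < ((Y \ B).ncard : ℝ) := by
      rw [hYB]; linarith
    have hYpos : (0 : ℝ) < (Y.ncard : ℝ) := by
      by_contra h
      push_neg at h
      have : (Y.ncard : ℝ) = 0 := le_antisymm h (by positivity)
      have hb0 : (0 : ℝ) ≤ (B.ncard : ℝ) := by positivity
      rw [this] at hBbig
      linarith
    -- pick y0 ∈ Y \ B
    have hYBne : (Y \ B).Nonempty := by
      rw [Set.nonempty_iff_ne_empty]
      intro h0
      rw [h0, Set.ncard_empty] at hYBbig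
      push_cast at hYBbig
      linarith
    obtain ⟨y0, hy0⟩ := hYBne
    have hy0Y : y0 ∈ Y := hy0.1
    have hy0nC : y0 ∉ C.supp := fun h => hy0.2 ⟨h, hy0.1⟩
    set j : Fin 2 := i + 1 with hj
    set D : (colorSub G c j).ConnectedComponent :=
      (colorSub G c j).connectedComponentMk y0 with hD
    -- every member of Y \ B is in D
    have hkey : ∀ y ∈ Y \ B, (colorSub G c j).Reachable y y0 := by
      intro y hy
      have hyY : y ∈ Y := hy.1
      have hynC : y ∉ C.supp := fun h => hy.2 ⟨h, hy.1⟩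
      -- common neighbor of y and y0 in A
      have hN1 : G.neighborSet y ⊆ X := hNX y hyY
      have hN2 : G.neighborSet y0 ⊆ X := hNX y0 hy0Y
      have c1 := ncard_inter_lower hN1 hN2
      have c2 := ncard_inter_lower
        (Set.inter_subset_left.trans hN1 : G.neighborSet y ∩ G.neighborSet y0 ⊆ X) hAX
      have d1 := hdY y hyY
      have d2 := hdY y0 hy0Y
      rw [nd] at d1 d2
      have hne : (G.neighborSet y ∩ G.neighborSet y0 ∩ A).Nonempty := by
        rw [Set.nonempty_iff_ne_empty]
        intro h0
        rw [h0, Set.ncard_empty] at c2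
        have e1 : ((G.neighborSet y).ncard : ℝ) + (G.neighborSet y0).ncard ≤
            (X.ncard : ℝ) + ((G.neighborSet y ∩ G.neighborSet y0).ncard : ℝ) := by
          exact_mod_cast c1
        have e2 : ((G.neighborSet y ∩ G.neighborSet y0).ncard : ℝ) + (A.ncard : ℝ) ≤
            (X.ncard : ℝ) := by exact_mod_cast c2
        linarith
      obtain ⟨x, hx⟩ := hne
      have hxA : x ∈ A := hx.2
      have hxC : x ∈ C.supp := hxA.1
      have hadj1 : G.Adj x y := hx.1.1.symm
      have hadj2 : G.Adj x y0 := hx.1.2.symm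
      have hc1 : c s(x, y) = j := color_of_adj hxC hynC hadj1
      have hc2 : c s(x, y0) = j := color_of_adj hxC hy0nC hadj2
      have a1 : (colorSub G c j).Adj y x := ⟨hadj1.symm, by rw [Sym2.eq_swap]; exact hc1⟩
      have a2 : (colorSub G c j).Adj x y0 := ⟨hadj2, hc2⟩
      exact a1.reachable.trans a2.reachable
    have hYBsub : Y \ B ⊆ D.supp := by
      intro y hy
      rw [SimpleGraph.ConnectedComponent.mem_supp_iff, hD]
      exact SimpleGraph.ConnectedComponent.sound (hkey y hy)
    -- every member of A is in D
    have hAsub : A ⊆ D.supp := by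
      intro x hxA
      have hxX : x ∈ X := hxA.2
      have hxC : x ∈ C.supp := hxA.1
      have hN : G.neighborSet x ⊆ Y := hNY x hxX
      have c1 := ncard_inter_lower hN (Set.diff_subset : Y \ B ⊆ Y)
      have d1 := hdX x hxX
      rw [nd] at d1
      have hne : (G.neighborSet x ∩ (Y \ B)).Nonempty := by
        rw [Set.nonempty_iff_ne_empty]
        intro h0
        rw [h0, Set.ncard_empty] at c1
        have e1 : ((G.neighborSet x).ncard : ℝ) + ((Y \ B).ncard : ℝ) ≤
            (Y.ncard : ℝ) := by exact_mod_cast c1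
        linarith
      obtain ⟨y, hy⟩ := hne
      have hynC : y ∉ C.supp := fun h => hy.2.2 ⟨h, hy.2.1⟩
      have hadj : G.Adj x y := hy.1
      have hc : c s(x, y) = j := color_of_adj hxC hynC hadj
      have a1 : (colorSub G c j).Adj x y := ⟨hadj, hc⟩
      have hyD : y ∈ D.supp := hYBsub hy.2
      rw [SimpleGraph.ConnectedComponent.mem_supp_iff] at hyD ⊢
      rw [← hyD]
      exact SimpleGraph.ConnectedComponent.sound a1.reachable
    -- conclude
    refine ⟨j, D, ?_⟩
    have hsub : A ∪ (Y \ B) ⊆ D.supp := Set.union_subset hAsub hYBsub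
    have hdisj2 : Disjoint A (Y \ B) :=
      (hdisj.mono hAX (Set.diff_subset : Y \ B ⊆ Y))
    have h1 : (A ∪ (Y \ B)).ncard ≤ D.supp.ncard := Set.ncard_le_ncard hsub D.supp.toFinite
    have h2 : (A ∪ (Y \ B)).ncard = A.ncard + (Y \ B).ncard := Set.ncard_union_eq hdisj2
    have h4 : ((A ∪ (Y \ B)).ncard : ℝ) ≤ (D.supp.ncard : ℝ) := by exact_mod_cast h1
    rw [h2] at h4
    push_cast at h4
    have h3 : (0 : ℝ) ≤ (X.ncard : ℝ) := by positivity
    linarith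

theorem stmt13 (m n : ℕ) (G : SimpleGraph (Fin m ⊕ Fin n))
    (hbip : G ≤ completeBipartiteGraph (Fin m) (Fin n))
    (hX : ∀ x : Fin m, (2 / 3 : ℝ) * n < (nd G (Sum.inl x) : ℝ))
    (hY : ∀ y : Fin n, (2 / 3 : ℝ) * m < (nd G (Sum.inr y) : ℝ))
    (c : Sym2 (Fin m ⊕ Fin n) → Fin 2)
    (hbig : ∃ (i : Fin 2) (C : (colorSub G c i).ConnectedComponent),
      2 * (m : ℝ) / 3 ≤ ((C.supp ∩ Set.range Sum.inl).ncard : ℝ) ∨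
      2 * (n : ℝ) / 3 ≤ ((C.supp ∩ Set.range Sum.inr).ncard : ℝ)) :
    ∃ (i : Fin 2) (C : (colorSub G c i).ConnectedComponent),
      ((m : ℝ) + n) / 2 ≤ C.supp.ncard := by
  classical
  set X : Set (Fin m ⊕ Fin n) := Set.range Sum.inl with hXdef
  set Y : Set (Fin m ⊕ Fin n) := Set.range Sum.inr with hYdef
  have cardX : X.ncard = m := by
    rw [← Nat.card_coe_set_eq, Nat.card_range_of_injective Sum.inl_injective,
      Nat.card_eq_fintype_card, Fintype.card_fin]
  have cardY : Y.ncard = n := by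
    rw [← Nat.card_coe_set_eq, Nat.card_range_of_injective Sum.inr_injective,
      Nat.card_eq_fintype_card, Fintype.card_fin]
  have hdisj : Disjoint X Y := by
    rw [Set.disjoint_left]
    rintro v ⟨a, rfl⟩ ⟨b, hb⟩
    exact Sum.inl_ne_inr hb.symm
  have hNXY : ∀ x : Fin m, G.neighborSet (Sum.inl x) ⊆ Y := by
    intro x v hv
    have := hbip hv
    simp only [completeBipartiteGraph] at this
    rcases this with ⟨_, h2⟩ | ⟨h1, _⟩
    · obtain ⟨b, hb⟩ := Sum.isRight_iff.mp h2
      exact ⟨b, hb.symm⟩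
    · simp at h1
  have hNYX : ∀ y : Fin n, G.neighborSet (Sum.inr y) ⊆ X := by
    intro y v hv
    have := hbip hv
    simp only [completeBipartiteGraph] at this
    rcases this with ⟨h1, _⟩ | ⟨_, h2⟩
    · simp at h1
    · obtain ⟨a, ha⟩ := Sum.isLeft_iff.mp h2
      exact ⟨a, ha.symm⟩
  have hNX : ∀ y ∈ Y, G.neighborSet y ⊆ X := by rintro v ⟨b, rfl⟩; exact hNYX b
  have hNY : ∀ x ∈ X, G.neighborSet x ⊆ Y := by rintro v ⟨a, rfl⟩; exact hNXY a
  have hdX : ∀ x ∈ X, (2 / 3 : ℝ) * Y.ncard < (nd G x : ℝ) := by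
    rintro v ⟨a, rfl⟩; rw [cardY]; exact hX a
  have hdY : ∀ y ∈ Y, (2 / 3 : ℝ) * X.ncard < (nd G y : ℝ) := by
    rintro v ⟨b, rfl⟩; rw [cardX]; exact hY b
  obtain ⟨i, C, hcase⟩ := hbig
  rcases hcase with h | h
  · obtain ⟨j, D, hD⟩ := key G X Y hdisj hNX hNY hdX hdY c i C
      (by rw [cardX]; exact h)
    exact ⟨j, D, by rw [cardX, cardY] at hD; exact hD⟩
  · obtain ⟨j, D, hD⟩ := key G Y X hdisj.symm hNY hNX hdY hdX c i C
      (by rw [cardY]; exact h)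
    refine ⟨j, D, ?_⟩
    rw [cardX, cardY] at hD
    linarith
end

section
/- Let G be a bipartite graph with parts X, Y of sizes m, n, with δ(X,Y) > (2/3)n and δ(Y,X) > (2/3)m, and fix a 2-coloring of the edges of G. If some vertex of G is incident only with edges of a single color, then G contains a monochromatic connected component with at least (m+n)/2 vertices. -/
open SimpleGraph

lemma aux_mono {V : Type*} [Fintype V] (G₁ G₂ : SimpleGraph V) (X Y : Set V)
    (hpart : ∀ w, w ∈ X ↔ w ∉ Y)
    (hbip : ∀ u w, G₁.Adj u w ∨ G₂.Adj u w → (u ∈ X ↔ w ∈ Y))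
    (hX : ∀ x ∈ X, (2 / 3 : ℝ) * Y.ncard < ((nd (G₁ ⊔ G₂) x : ℕ) : ℝ))
    (v : V) (hvX : v ∈ X) (hv : ∀ u, ¬ G₂.Adj v u) :
    (∃ C : G₁.ConnectedComponent, ((X.ncard : ℝ) + Y.ncard) / 2 ≤ C.supp.ncard) ∨
    (∃ C : G₂.ConnectedComponent, ((X.ncard : ℝ) + Y.ncard) / 2 ≤ C.supp.ncard) := by
  classical
  have hXY : Disjoint X Y := Set.disjoint_left.mpr (fun a ha => (hpart a).mp ha)
  set C := G₁.connectedComponentMk v with hC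
  -- intersection counting helper
  have hinter : ∀ A B' : Set V, A ⊆ Y → B' ⊆ Y →
      (A.ncard : ℝ) + B'.ncard - Y.ncard ≤ ((A ∩ B').ncard : ℝ) := by
    intro A B' hA hB'
    have h1 : (A ∪ B').ncard + (A ∩ B').ncard = A.ncard + B'.ncard :=
      Set.ncard_union_add_ncard_inter A B' (Set.toFinite _) (Set.toFinite _)
    have h2 : (A ∪ B').ncard ≤ Y.ncard :=
      Set.ncard_le_ncard (Set.union_subset hA hB') (Set.toFinite _)
    have h1' : ((A ∪ B').ncard : ℝ) + (A ∩ B').ncard = A.ncard + B'.ncard := by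
      exact_mod_cast h1
    have h2' : ((A ∪ B').ncard : ℝ) ≤ Y.ncard := by exact_mod_cast h2
    linarith
  have hNv_sub : (G₁ ⊔ G₂).neighborSet v ⊆ C.supp ∩ Y := by
    intro u hu
    have h1 : G₁.Adj v u := by
      rcases hu with h | h
      · exact h
      · exact absurd h (hv u)
    refine ⟨?_, (hbip v u (Or.inl h1)).mp hvX⟩
    simp only [ConnectedComponent.mem_supp_iff, hC]
    exact ConnectedComponent.eq.mpr h1.reachable.symm
  set B := C.supp ∩ Y with hB
  have hBY : B ⊆ Y := Set.inter_subset_right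
  have hBcard : (2 / 3 : ℝ) * Y.ncard < (B.ncard : ℝ) := by
    have h1 := hX v hvX
    have h2 : nd (G₁ ⊔ G₂) v ≤ B.ncard :=
      Set.ncard_le_ncard hNv_sub (Set.toFinite _)
    have h2' : ((nd (G₁ ⊔ G₂) v : ℕ) : ℝ) ≤ B.ncard := by exact_mod_cast h2
    linarith
  by_cases hall : ∀ x ∈ X, x ∈ C.supp
  · left
    refine ⟨C, ?_⟩
    have hsub : X ∪ B ⊆ C.supp := Set.union_subset hall Set.inter_subset_left
    have hdisj : Disjoint X B := hXY.mono_right hBY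
    have he : (X ∪ B).ncard = X.ncard + B.ncard :=
      Set.ncard_union_eq hdisj (Set.toFinite _) (Set.toFinite _)
    have hle : (X ∪ B).ncard ≤ C.supp.ncard := Set.ncard_le_ncard hsub (Set.toFinite _)
    have hle' : ((X.ncard : ℝ)) + B.ncard ≤ C.supp.ncard := by
      rw [he] at hle
      exact_mod_cast hle
    have hm : (0 : ℝ) ≤ (X.ncard : ℝ) := Nat.cast_nonneg _
    have hn : (0 : ℝ) ≤ (Y.ncard : ℝ) := Nat.cast_nonneg _
    linarith
  · push_neg at hall
    obtain ⟨x₁, hx₁X, hx₁C⟩ := hall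
    set D := G₂.connectedComponentMk x₁ with hD
    have hNY : ∀ x ∈ X, (G₁ ⊔ G₂).neighborSet x ⊆ Y := by
      intro x hx u hu
      exact (hbip x u hu).mp hx
    set S := (G₁ ⊔ G₂).neighborSet x₁ ∩ B with hS
    have hSY : S ⊆ Y := fun y hy => hBY hy.2
    have hScard : (Y.ncard : ℝ) / 3 < S.ncard := by
      have h0 := hinter _ _ (hNY x₁ hx₁X) hBY
      have h1 := hX x₁ hx₁X
      have hnd : nd (G₁ ⊔ G₂) x₁ = ((G₁ ⊔ G₂).neighborSet x₁).ncard := rfl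
      rw [hnd] at h1
      linarith
    have hSC : S ⊆ C.supp := fun y hy => hy.2.1
    have hadj_mem : ∀ (H : SimpleGraph V) (a b : V), H.Adj a b →
        b ∈ (H.connectedComponentMk a).supp := by
      intro H a b hab
      simp only [ConnectedComponent.mem_supp_iff]
      exact ConnectedComponent.eq.mpr hab.reachable.symm
    have hmem_adj : ∀ (H : SimpleGraph V) (E : H.ConnectedComponent) (a b : V),
        H.Adj a b → b ∈ E.supp → a ∈ E.supp := by
      intro H E a b hab hb
      simp only [ConnectedComponent.mem_supp_iff] at *
      rw [← hb]
      exact ConnectedComponent.eq.mpr hab.reachable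
    have hSD : S ⊆ D.supp := by
      intro y hy
      have h2 : G₂.Adj x₁ y := by
        rcases hy.1 with h | h
        · exact absurd (hmem_adj G₁ C x₁ y h hy.2.1) hx₁C
        · exact h
      exact hadj_mem G₂ x₁ y h2
    have hcover : X ⊆ C.supp ∪ D.supp := by
      intro x hxX
      have hne : ((G₁ ⊔ G₂).neighborSet x ∩ S).Nonempty := by
        have h0 := hinter _ _ (hNY x hxX) hSY
        have h1 := hX x hxX
        have hnd : nd (G₁ ⊔ G₂) x = ((G₁ ⊔ G₂).neighborSet x).ncard := rfl
        rw [hnd] at h1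
        have hpos : (0 : ℝ) < (((G₁ ⊔ G₂).neighborSet x ∩ S).ncard : ℝ) := by linarith
        exact Set.nonempty_of_ncard_ne_zero (by exact_mod_cast hpos.ne')
      obtain ⟨y, hy1, hy2⟩ := hne
      rcases hy1 with h | h
      · exact Or.inl (hmem_adj G₁ C x y h (hSC hy2))
      · exact Or.inr (hmem_adj G₂ D x y h (hSD hy2))
    -- counting
    have hcX : ∀ (T : Set V), (T ∩ X).ncard + (T ∩ Y).ncard ≤ T.ncard := by
      intro T
      have hdisj : Disjoint (T ∩ X) (T ∩ Y) :=
        (hXY.mono_left Set.inter_subset_right).mono_right Set.inter_subset_right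
      have he : (T ∩ X ∪ T ∩ Y).ncard = (T ∩ X).ncard + (T ∩ Y).ncard :=
        Set.ncard_union_eq hdisj (Set.toFinite _) (Set.toFinite _)
      rw [← he]
      exact Set.ncard_le_ncard (Set.union_subset Set.inter_subset_left Set.inter_subset_left)
        (Set.toFinite _)
    have c1 := hcX C.supp
    have c2 := hcX D.supp
    have c3 : X.ncard ≤ (C.supp ∩ X).ncard + (D.supp ∩ X).ncard := by
      calc X.ncard ≤ (C.supp ∩ X ∪ D.supp ∩ X).ncard := by
            refine Set.ncard_le_ncard ?_ (Set.toFinite _)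
            intro x hx
            rcases hcover hx with h | h
            · exact Or.inl ⟨h, hx⟩
            · exact Or.inr ⟨h, hx⟩
        _ ≤ (C.supp ∩ X).ncard + (D.supp ∩ X).ncard := Set.ncard_union_le _ _
    have c4 : (2 / 3 : ℝ) * Y.ncard < ((C.supp ∩ Y).ncard : ℝ) := hBcard
    have c5 : (Y.ncard : ℝ) / 3 < ((D.supp ∩ Y).ncard : ℝ) := by
      have : S.ncard ≤ (D.supp ∩ Y).ncard :=
        Set.ncard_le_ncard (fun y hy => ⟨hSD hy, hSY hy⟩) (Set.toFinite _)
      have := (Nat.cast_le (α := ℝ)).mpr this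
      linarith
    have c1' : ((C.supp ∩ X).ncard : ℝ) + ((C.supp ∩ Y).ncard : ℝ) ≤ C.supp.ncard := by
      exact_mod_cast c1
    have c2' : ((D.supp ∩ X).ncard : ℝ) + ((D.supp ∩ Y).ncard : ℝ) ≤ D.supp.ncard := by
      exact_mod_cast c2
    have c3' : (X.ncard : ℝ) ≤ ((C.supp ∩ X).ncard : ℝ) + ((D.supp ∩ X).ncard : ℝ) := by
      exact_mod_cast c3
    rcases le_or_gt (((X.ncard : ℝ) + Y.ncard) / 2) (C.supp.ncard : ℝ) with h | h
    · exact Or.inl ⟨C, h⟩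
    · exact Or.inr ⟨D, by linarith⟩

lemma fin2_other (i : Fin 2) : ∃ j : Fin 2, j ≠ i ∧ ∀ x : Fin 2, x ≠ i → x = j := by
  fin_cases i
  · exact ⟨1, by decide, by decide⟩
  · exact ⟨0, by decide, by decide⟩

theorem stmt14 (m n : ℕ) (G : SimpleGraph (Fin m ⊕ Fin n))
    (hbip : G ≤ completeBipartiteGraph (Fin m) (Fin n))
    (hX : ∀ x : Fin m, (2 / 3 : ℝ) * n < (nd G (Sum.inl x) : ℝ))
    (hY : ∀ y : Fin n, (2 / 3 : ℝ) * m < (nd G (Sum.inr y) : ℝ))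
    (c : Sym2 (Fin m ⊕ Fin n) → Fin 2)
    (hv : ∃ (v : Fin m ⊕ Fin n) (i : Fin 2), ∀ u, G.Adj v u → c s(v, u) = i) :
    ∃ (i : Fin 2) (C : (colorSub G c i).ConnectedComponent),
      ((m : ℝ) + n) / 2 ≤ C.supp.ncard := by
  classical
  obtain ⟨v, i, hvi⟩ := hv
  obtain ⟨j, hji, hcov⟩ := fin2_other i
  set XL : Set (Fin m ⊕ Fin n) := Set.range Sum.inl with hXL
  set YR : Set (Fin m ⊕ Fin n) := Set.range Sum.inr with hYR
  have hXLcard : XL.ncard = m := by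
    rw [hXL, ← Nat.card_coe_set_eq, Nat.card_range_of_injective Sum.inl_injective,
      Nat.card_eq_fintype_card, Fintype.card_fin]
  have hYRcard : YR.ncard = n := by
    rw [hYR, ← Nat.card_coe_set_eq, Nat.card_range_of_injective Sum.inr_injective,
      Nat.card_eq_fintype_card, Fintype.card_fin]
  have hsup : colorSub G c i ⊔ colorSub G c j = G := by
    ext u w
    constructor
    · rintro (⟨h, _⟩ | ⟨h, _⟩) <;> exact h
    · intro h
      by_cases hc : c s(u, w) = i
      · exact Or.inl ⟨h, hc⟩
      · exact Or.inr ⟨h, hcov _ hc⟩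
  have hcross : ∀ u w : Fin m ⊕ Fin n,
      (colorSub G c i).Adj u w ∨ (colorSub G c j).Adj u w → (u ∈ XL ↔ w ∈ YR) := by
    intro u w h
    have hG : G.Adj u w := by rcases h with h | h <;> exact h.1
    have hcb := hbip hG
    rcases u with x | y <;> rcases w with x' | y'
    · exact absurd hcb (by simp [completeBipartiteGraph])
    · exact iff_of_true ⟨x, rfl⟩ ⟨y', rfl⟩
    · exact iff_of_false (by simp [hXL]) (by simp [hYR])
    · exact absurd hcb (by simp [completeBipartiteGraph])
  have hcross' : ∀ u w : Fin m ⊕ Fin n,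
      (colorSub G c i).Adj u w ∨ (colorSub G c j).Adj u w → (u ∈ YR ↔ w ∈ XL) := by
    intro u w h
    have hG : G.Adj u w := by rcases h with h | h <;> exact h.1
    have hcb := hbip hG
    rcases u with x | y <;> rcases w with x' | y'
    · exact absurd hcb (by simp [completeBipartiteGraph])
    · exact iff_of_false (by simp [hYR]) (by simp [hXL])
    · exact iff_of_true ⟨y, rfl⟩ ⟨x', rfl⟩
    · exact absurd hcb (by simp [completeBipartiteGraph])
  rcases v with x | y
  · -- v in the left part
    have key := aux_mono (colorSub G c i) (colorSub G c j) XL YR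
      (by rintro (x' | y') <;> simp [hXL, hYR])
      hcross
      (by
        rintro w ⟨x', rfl⟩
        rw [hsup, hYRcard]
        exact hX x')
      (Sum.inl x) ⟨x, rfl⟩
      (by
        rintro u ⟨hadj, hcj⟩
        exact hji (by rw [← hcj, hvi u hadj]))
    rw [hXLcard, hYRcard] at key
    rcases key with ⟨C, hC⟩ | ⟨C, hC⟩
    · exact ⟨i, C, hC⟩
    · exact ⟨j, C, hC⟩
  · -- v in the right part
    have key := aux_mono (colorSub G c i) (colorSub G c j) YR XL
      (by rintro (x' | y') <;> simp [hXL, hYR])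
      hcross'
      (by
        rintro w ⟨y', rfl⟩
        rw [hsup, hXLcard]
        exact hY y')
      (Sum.inr y) ⟨y, rfl⟩
      (by
        rintro u ⟨hadj, hcj⟩
        exact hji (by rw [← hcj, hvi u hadj]))
    rw [hYRcard, hXLcard] at key
    rcases key with ⟨C, hC⟩ | ⟨C, hC⟩
    · exact ⟨i, C, by rw [add_comm (m : ℝ) n]; exact hC⟩
    · exact ⟨j, C, by rw [add_comm (m : ℝ) n]; exact hC⟩
end

section
/- Let G be a bipartite graph with parts X, Y of sizes m, n, with δ(X,Y) > (2/3)n and δ(Y,X) > (2/3)m, and fix a 2-coloring of its edges. If H is a largest monochromatic component (say blue), then |H ∩ Y| > n/3 and |H ∩ X| > m/3. -/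
open SimpleGraph

lemma colorSub_adj {V : Type*} {r : ℕ} (G : SimpleGraph V) (c : Sym2 V → Fin r) (i : Fin r)
    (u v : V) : (colorSub G c i).Adj u v ↔ G.Adj u v ∧ c s(u, v) = i := Iff.rfl

lemma key_s15 {V : Type*} [Fintype V] (G : SimpleGraph V) (X Y : Set V)
    (hdisj : Disjoint X Y) (hcover : X ∪ Y = Set.univ)
    (hne : X.Nonempty)
    (hXY : ∀ x ∈ X, G.neighborSet x ⊆ Y)
    (hdeg : ∀ x ∈ X, (2 / 3 : ℝ) * Y.ncard < ((G.neighborSet x).ncard : ℝ))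
    (c : Sym2 V → Fin 2) (i₀ : Fin 2)
    (C₀ : (colorSub G c i₀).ConnectedComponent)
    (hmax : ∀ (j : Fin 2) (D : (colorSub G c j).ConnectedComponent),
      D.supp.ncard ≤ C₀.supp.ncard) :
    (Y.ncard : ℝ) / 3 < ((C₀.supp ∩ Y).ncard : ℝ) := by
  by_contra hb
  push_neg at hb
  set i₁ : Fin 2 := i₀ + 1 with hi₁def
  have hcol : ∀ i j : Fin 2, j = i ∨ j = i + 1 := by decide
  set S := C₀.supp with hS
  -- adjacency preserves component membership
  have hadj_supp : ∀ (j : Fin 2) (D : (colorSub G c j).ConnectedComponent) (v w : V),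
      v ∈ D.supp → (colorSub G c j).Adj v w → w ∈ D.supp := by
    intro j D v w hv hvw
    rw [SimpleGraph.ConnectedComponent.mem_supp_iff] at hv ⊢
    rw [← hv]
    exact SimpleGraph.ConnectedComponent.sound hvw.symm.reachable
  have hsub : ∀ (j : Fin 2) (v : V),
      (colorSub G c j).neighborSet v ⊆ G.neighborSet v := fun j v w h => h.1
  -- decomposition of supp cardinality
  have hsupp_card : ∀ (j : Fin 2) (D : (colorSub G c j).ConnectedComponent),
      D.supp.ncard = (D.supp ∩ X).ncard + (D.supp ∩ Y).ncard := by
    intro j D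
    rw [← Set.ncard_union_eq (hdisj.mono Set.inter_subset_right Set.inter_subset_right)
      (Set.toFinite _) (Set.toFinite _), ← Set.inter_union_distrib_left, hcover,
      Set.inter_univ]
  have hScard : S.ncard = (S ∩ X).ncard + (S ∩ Y).ncard := hsupp_card i₀ C₀
  -- the contradiction helper
  have contra : ∀ (j : Fin 2) (D : (colorSub G c j).ConnectedComponent),
      S ∩ X ⊆ D.supp → (Y.ncard : ℝ) / 3 < ((D.supp ∩ Y).ncard : ℝ) → False := by
    intro j D hsubX hbig
    have h1 : (S ∩ X).ncard ≤ (D.supp ∩ X).ncard :=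
      Set.ncard_le_ncard (fun v hv => ⟨hsubX hv, hv.2⟩) (Set.toFinite _)
    have h2 : D.supp.ncard ≤ S.ncard := hmax j D
    rw [hScard, hsupp_card j D] at h2
    have h3 : (D.supp ∩ Y).ncard ≤ (S ∩ Y).ncard := by omega
    have h3' : ((D.supp ∩ Y).ncard : ℝ) ≤ ((S ∩ Y).ncard : ℝ) := by exact_mod_cast h3
    linarith
  -- color degree split
  have hsplit : ∀ v : V, ((G.neighborSet v).ncard : ℝ) ≤
      (((colorSub G c i₀).neighborSet v).ncard : ℝ) +
      (((colorSub G c i₁).neighborSet v).ncard : ℝ) := by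
    intro v
    have hsubU : G.neighborSet v ⊆
        (colorSub G c i₀).neighborSet v ∪ (colorSub G c i₁).neighborSet v := by
      intro w hw
      rcases hcol i₀ (c s(v, w)) with h | h
      · exact Or.inl ⟨hw, h⟩
      · exact Or.inr ⟨hw, h⟩
    have := (Set.ncard_le_ncard hsubU (Set.toFinite _)).trans
      (Set.ncard_union_le _ _)
    exact_mod_cast this
  by_cases hax : (S ∩ X).Nonempty
  · -- i₀-neighbors of vertices of S ∩ X live in S ∩ Y
    have hblue : ∀ x ∈ S ∩ X, (colorSub G c i₀).neighborSet x ⊆ S ∩ Y := by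
      intro x hx w hw
      exact ⟨hadj_supp i₀ C₀ x w hx.1 hw, hXY x hx.2 (hsub i₀ x hw)⟩
    have hred : ∀ x ∈ S ∩ X,
        (Y.ncard : ℝ) / 3 < (((colorSub G c i₁).neighborSet x).ncard : ℝ) := by
      intro x hx
      have h1 : (((colorSub G c i₀).neighborSet x).ncard : ℝ) ≤ ((S ∩ Y).ncard : ℝ) := by
        exact_mod_cast Set.ncard_le_ncard (hblue x hx) (Set.toFinite _)
      have h2 := hdeg x hx.2
      have h3 := hsplit x
      linarith
    by_cases hsame : ∀ x₁ ∈ S ∩ X, ∀ x₂ ∈ S ∩ X,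
        (colorSub G c i₁).connectedComponentMk x₁ = (colorSub G c i₁).connectedComponentMk x₂
    · obtain ⟨x, hx⟩ := hax
      set D := (colorSub G c i₁).connectedComponentMk x with hD
      refine contra i₁ D ?_ ?_
      · intro v hv
        rw [SimpleGraph.ConnectedComponent.mem_supp_iff]
        exact hsame v hv x hx
      · have hxD : x ∈ D.supp := by
          rw [SimpleGraph.ConnectedComponent.mem_supp_iff]
        have hnb : (colorSub G c i₁).neighborSet x ⊆ D.supp ∩ Y := by
          intro w hw
          exact ⟨hadj_supp i₁ D x w hxD hw, hXY x hx.2 (hsub i₁ x hw)⟩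
        have := Set.ncard_le_ncard hnb (Set.toFinite _)
        have h' : (((colorSub G c i₁).neighborSet x).ncard : ℝ) ≤
            ((D.supp ∩ Y).ncard : ℝ) := by exact_mod_cast this
        linarith [hred x hx]
    · push_neg at hsame
      obtain ⟨x₁, hx₁, x₂, hx₂, hne12⟩ := hsame
      have hcommon : G.neighborSet x₁ ∩ G.neighborSet x₂ ⊆ S ∩ Y := by
        intro y hy
        have hyY : y ∈ Y := hXY x₁ hx₁.2 hy.1
        rcases hcol i₀ (c s(x₁, y)) with h | h
        · exact ⟨hadj_supp i₀ C₀ x₁ y hx₁.1 ⟨hy.1, h⟩, hyY⟩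
        · rcases hcol i₀ (c s(x₂, y)) with h' | h'
          · exact ⟨hadj_supp i₀ C₀ x₂ y hx₂.1 ⟨hy.2, h'⟩, hyY⟩
          · exfalso
            apply hne12
            have e1 : (colorSub G c i₁).Adj x₁ y := ⟨hy.1, h⟩
            have e2 : (colorSub G c i₁).Adj x₂ y := ⟨hy.2, h'⟩
            calc (colorSub G c i₁).connectedComponentMk x₁
                = (colorSub G c i₁).connectedComponentMk y :=
                  SimpleGraph.ConnectedComponent.sound e1.reachable
              _ = (colorSub G c i₁).connectedComponentMk x₂ :=
                  SimpleGraph.ConnectedComponent.sound e2.symm.reachable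
      -- inclusion-exclusion
      have hU : (G.neighborSet x₁ ∪ G.neighborSet x₂).ncard ≤ Y.ncard :=
        Set.ncard_le_ncard (Set.union_subset (hXY x₁ hx₁.2) (hXY x₂ hx₂.2))
          (Set.toFinite _)
      have hIE := Set.ncard_inter_add_ncard_union (G.neighborSet x₁) (G.neighborSet x₂)
        (Set.toFinite _) (Set.toFinite _)
      have hI : (G.neighborSet x₁ ∩ G.neighborSet x₂).ncard ≤ (S ∩ Y).ncard :=
        Set.ncard_le_ncard hcommon (Set.toFinite _)
      have d1 := hdeg x₁ hx₁.2
      have d2 := hdeg x₂ hx₂.2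
      have hU' : ((G.neighborSet x₁ ∪ G.neighborSet x₂).ncard : ℝ) ≤ (Y.ncard : ℝ) := by
        exact_mod_cast hU
      have hIE' : ((G.neighborSet x₁ ∩ G.neighborSet x₂).ncard : ℝ) +
          ((G.neighborSet x₁ ∪ G.neighborSet x₂).ncard : ℝ) =
          ((G.neighborSet x₁).ncard : ℝ) + ((G.neighborSet x₂).ncard : ℝ) := by
        exact_mod_cast hIE
      have hI' : ((G.neighborSet x₁ ∩ G.neighborSet x₂).ncard : ℝ) ≤
          ((S ∩ Y).ncard : ℝ) := by exact_mod_cast hI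
      linarith
  · -- S ∩ X empty
    rw [Set.not_nonempty_iff_eq_empty] at hax
    obtain ⟨x₀, hx₀⟩ := hne
    have hds : (Y.ncard : ℝ) / 3 < (((colorSub G c i₀).neighborSet x₀).ncard : ℝ) ∨
        (Y.ncard : ℝ) / 3 < (((colorSub G c i₁).neighborSet x₀).ncard : ℝ) := by
      by_contra hcon
      push_neg at hcon
      have := hdeg x₀ hx₀
      have := hsplit x₀
      linarith [hcon.1, hcon.2]
    have main : ∀ j : Fin 2, (Y.ncard : ℝ) / 3 <
        (((colorSub G c j).neighborSet x₀).ncard : ℝ) → False := by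
      intro j hj
      set D := (colorSub G c j).connectedComponentMk x₀ with hD
      refine contra j D ?_ ?_
      · rw [hax]; exact Set.empty_subset _
      · have hxD : x₀ ∈ D.supp := by
          rw [SimpleGraph.ConnectedComponent.mem_supp_iff]
        have hnb : (colorSub G c j).neighborSet x₀ ⊆ D.supp ∩ Y := by
          intro w hw
          exact ⟨hadj_supp j D x₀ w hxD hw, hXY x₀ hx₀ (hsub j x₀ hw)⟩
        have := Set.ncard_le_ncard hnb (Set.toFinite _)
        have h' : (((colorSub G c j).neighborSet x₀).ncard : ℝ) ≤
            ((D.supp ∩ Y).ncard : ℝ) := by exact_mod_cast this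
        linarith
    rcases hds with h | h
    · exact main i₀ h
    · exact main i₁ h

theorem stmt15 (m n : ℕ) (G : SimpleGraph (Fin m ⊕ Fin n))
    (hbip : G ≤ completeBipartiteGraph (Fin m) (Fin n))
    (hX : ∀ x : Fin m, (2 / 3 : ℝ) * n < (nd G (Sum.inl x) : ℝ))
    (hY : ∀ y : Fin n, (2 / 3 : ℝ) * m < (nd G (Sum.inr y) : ℝ))
    (c : Sym2 (Fin m ⊕ Fin n) → Fin 2)
    (i₀ : Fin 2) (C₀ : (colorSub G c i₀).ConnectedComponent)
    (hmax : ∀ (j : Fin 2) (D : (colorSub G c j).ConnectedComponent),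
      D.supp.ncard ≤ C₀.supp.ncard) :
    (n : ℝ) / 3 < ((C₀.supp ∩ Set.range Sum.inr).ncard : ℝ) ∧
    (m : ℝ) / 3 < ((C₀.supp ∩ Set.range Sum.inl).ncard : ℝ) := by
  -- basic facts
  have hcardL : (Set.range (Sum.inl : Fin m → Fin m ⊕ Fin n)).ncard = m := by
    rw [Set.ncard_eq_toFinset_card', Set.toFinset_range]
    simp [Finset.card_image_of_injective _ Sum.inl_injective]
  have hcardR : (Set.range (Sum.inr : Fin n → Fin m ⊕ Fin n)).ncard = n := by
    rw [Set.ncard_eq_toFinset_card', Set.toFinset_range]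
    simp [Finset.card_image_of_injective _ Sum.inr_injective]
  have hnbL : ∀ x ∈ Set.range (Sum.inl : Fin m → Fin m ⊕ Fin n),
      G.neighborSet x ⊆ Set.range Sum.inr := by
    rintro x ⟨a, rfl⟩ w hw
    have := hbip hw
    rcases w with b | b
    · simp at this
    · exact ⟨b, rfl⟩
  have hnbR : ∀ y ∈ Set.range (Sum.inr : Fin n → Fin m ⊕ Fin n),
      G.neighborSet y ⊆ Set.range Sum.inl := by
    rintro y ⟨a, rfl⟩ w hw
    have := hbip hw
    rcases w with b | b
    · exact ⟨b, rfl⟩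
    · simp at this
  -- positivity
  have hmn : 0 < m ∨ 0 < n := by
    obtain ⟨v, -⟩ := C₀.exists_rep
    rcases v with a | a
    · exact Or.inl a.pos
    · exact Or.inr a.pos
  have himp1 : 0 < m → 0 < n := by
    intro hm
    by_contra hn
    push_neg at hn
    interval_cases n
    have h1 := hX ⟨0, hm⟩
    have h2 : G.neighborSet (Sum.inl (⟨0, hm⟩ : Fin m)) = ∅ := by
      apply Set.eq_empty_of_subset_empty
      intro w hw
      obtain ⟨b, rfl⟩ := hnbL _ ⟨_, rfl⟩ hw
      exact absurd b.pos (by omega)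
    rw [nd, h2] at h1
    simp at h1
  have himp2 : 0 < n → 0 < m := by
    intro hn
    by_contra hm
    push_neg at hm
    interval_cases m
    have h1 := hY ⟨0, hn⟩
    have h2 : G.neighborSet (Sum.inr (⟨0, hn⟩ : Fin n)) = ∅ := by
      apply Set.eq_empty_of_subset_empty
      intro w hw
      obtain ⟨b, rfl⟩ := hnbR _ ⟨_, rfl⟩ hw
      exact absurd b.pos (by omega)
    rw [nd, h2] at h1
    simp at h1
  have hm : 0 < m := by rcases hmn with h | h; exact h; exact himp2 h
  have hn : 0 < n := himp1 hm
  have hdisj : Disjoint (Set.range (Sum.inl : Fin m → Fin m ⊕ Fin n))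
      (Set.range (Sum.inr : Fin n → Fin m ⊕ Fin n)) := by
    rw [Set.disjoint_iff_inter_eq_empty]
    ext v
    rcases v with a | a <;> simp
  have hcover : Set.range (Sum.inl : Fin m → Fin m ⊕ Fin n) ∪ Set.range Sum.inr =
      Set.univ := by
    ext v
    rcases v with a | a <;> simp
  constructor
  · have := key_s15 G (Set.range Sum.inl) (Set.range Sum.inr) hdisj hcover
      ⟨Sum.inl ⟨0, hm⟩, ⟨0, hm⟩, rfl⟩ hnbL
      (by rintro x ⟨a, rfl⟩; rw [hcardR]; exact hX a) c i₀ C₀ hmax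
    rwa [hcardR] at this
  · have := key_s15 G (Set.range Sum.inr) (Set.range Sum.inl) hdisj.symm
      (by rw [Set.union_comm]; exact hcover)
      ⟨Sum.inr ⟨0, hn⟩, ⟨0, hn⟩, rfl⟩ hnbR
      (by rintro y ⟨a, rfl⟩; rw [hcardL]; exact hY a) c i₀ C₀ hmax
    rwa [hcardL] at this
end
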